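/- For every configuration K_1, …, K_m of subspaces of V⊗W with positive integer weights ω_1, …, ω_m, define μ_max to be the maximum of ℘_ω(H) = (1/dim H)·Σ_i ω_i·dim(K_i ∩ (H⊗W)) over all nonzero subspaces H ⊆ V. Then: (a) if H and H' are nonzero subspaces with ℘_ω(H) = ℘_ω(H') = μ_max, then ℘_ω(H + H') = μ_max; (b) there exists a unique subspace V¹ ⊆ V with ℘_ω(V¹) = μ_max that contains every nonzero subspace H with ℘_ω(H) = μ_max. -/

import Mathlib

open scoped TensorProduct
open Module

noncomputable section

variable {V : Type*} [AddCommGroup V] [Module ℂ V]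

/-- The image of `H ⊗ W` in `V ⊗ W` under the canonical inclusion, for `H ⊆ V`. -/
def tensorSub (W : Type*) [AddCommGroup W] [Module ℂ W] (H : Submodule ℂ V) :
    Submodule ℂ (V ⊗[ℂ] W) :=
  LinearMap.range (TensorProduct.map H.subtype (LinearMap.id : W →ₗ[ℂ] W))

variable {W : Type*} [AddCommGroup W] [Module ℂ W]

/-- `℘_ω(H) = (1/dim H)·Σ_i ω_i·dim(K_i ∩ (H⊗W))`. -/
def slopeConfig {m : ℕ} (ω : Fin m → ℕ) (K : Fin m → Submodule ℂ (V ⊗[ℂ] W))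
    (H : Submodule ℂ V) : ℚ :=
  (∑ i, (ω i : ℚ) * (finrank ℂ ↥(K i ⊓ tensorSub W H) : ℚ)) / (finrank ℂ ↥H : ℚ)

/-- `℘_ω({K_i}) = (1/dim V)·Σ_i ω_i·dim K_i`. -/
def totalConfig {m : ℕ} (ω : Fin m → ℕ) (K : Fin m → Submodule ℂ (V ⊗[ℂ] W)) : ℚ :=
  (∑ i, (ω i : ℚ) * (finrank ℂ ↥(K i) : ℚ)) / (finrank ℂ V : ℚ)

/-! ### Auxiliary lemmas -/

lemma tensorSub_eq_span (H : Submodule ℂ V) :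
    tensorSub W H = Submodule.span ℂ {x : V ⊗[ℂ] W | ∃ h ∈ H, ∃ w : W, h ⊗ₜ w = x} := by
  rw [tensorSub, TensorProduct.range_map_eq_span_tmul]
  congr 1
  ext x
  constructor
  · rintro ⟨m, n, rfl⟩; exact ⟨m, m.2, n, rfl⟩
  · rintro ⟨h, hh, w, rfl⟩; exact ⟨⟨h, hh⟩, w, rfl⟩

lemma tmul_mem_tensorSub {H : Submodule ℂ V} {h : V} (hh : h ∈ H) (w : W) :
    h ⊗ₜ w ∈ tensorSub W H := by
  rw [tensorSub_eq_span]
  exact Submodule.subset_span ⟨h, hh, w, rfl⟩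

lemma tensorSub_mono {H H' : Submodule ℂ V} (hle : H ≤ H') :
    tensorSub W H ≤ tensorSub W H' := by
  rw [tensorSub_eq_span, tensorSub_eq_span]
  apply Submodule.span_mono
  rintro x ⟨a, ha, w, rfl⟩
  exact ⟨a, hle ha, w, rfl⟩

lemma tensorSub_bot : tensorSub W (⊥ : Submodule ℂ V) = ⊥ := by
  rw [tensorSub_eq_span, Submodule.span_eq_bot]
  rintro x ⟨h, hh, w, rfl⟩
  simp only [Submodule.mem_bot] at hh
  subst hh
  simp

lemma tensorSub_sup (H H' : Submodule ℂ V) :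
    tensorSub W (H ⊔ H') = tensorSub W H ⊔ tensorSub W H' := by
  refine le_antisymm ?_ (sup_le (tensorSub_mono le_sup_left) (tensorSub_mono le_sup_right))
  rw [tensorSub_eq_span, Submodule.span_le]
  rintro x ⟨h, hh, w, rfl⟩
  obtain ⟨a, ha, b, hb, rfl⟩ := Submodule.mem_sup.mp hh
  rw [TensorProduct.add_tmul]
  exact Submodule.add_mem _ (Submodule.mem_sup_left (tmul_mem_tensorSub ha w))
    (Submodule.mem_sup_right (tmul_mem_tensorSub hb w))

lemma tensorSub_eq_iInf {ι : Type*} [DecidableEq ι] (b : Basis ι ℂ W) (H : Submodule ℂ V) :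
    tensorSub W H = ⨅ i : ι, Submodule.comap
      ((Finsupp.lapply i : (ι →₀ V) →ₗ[ℂ] V) ∘ₗ
        ((TensorProduct.congr (LinearEquiv.refl ℂ V) b.repr).trans
          (TensorProduct.finsuppScalarRight ℂ ℂ V ι)).toLinearMap) H := by
  set e : (V ⊗[ℂ] W) ≃ₗ[ℂ] (ι →₀ V) :=
    (TensorProduct.congr (LinearEquiv.refl ℂ V) b.repr).trans
      (TensorProduct.finsuppScalarRight ℂ ℂ V ι) with he
  have he_tmul : ∀ (v : V) (w : W) (i : ι), e (v ⊗ₜ w) i = b.repr w i • v := by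
    intro v w i
    simp only [he, LinearEquiv.trans_apply, TensorProduct.congr_tmul, LinearEquiv.refl_apply,
      TensorProduct.finsuppScalarRight_apply_tmul_apply]
  have he_symm_single : ∀ (i : ι) (v : V), e.symm (Finsupp.single i v) = v ⊗ₜ b i := by
    intro i v
    apply e.injective
    rw [e.apply_symm_apply]
    ext j
    rw [he_tmul]
    by_cases hij : i = j
    · subst hij; simp
    · simp [Finsupp.single_apply, hij, Ne.symm hij]
  refine le_antisymm ?_ ?_
  · rw [tensorSub_eq_span, Submodule.span_le]
    rintro x ⟨h, hh, w, rfl⟩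
    refine Submodule.mem_iInf _ |>.mpr fun i => ?_
    simp only [Submodule.mem_comap, LinearMap.coe_comp, Function.comp_apply,
      LinearEquiv.coe_coe, Finsupp.lapply_apply]
    rw [he_tmul]
    exact H.smul_mem _ hh
  · intro x hx
    have hx' : ∀ i : ι, e x i ∈ H := by
      intro i
      have := Submodule.mem_iInf _ |>.mp hx i
      simpa using this
    have hxe : x = (e x).sum fun i v => v ⊗ₜ b i := by
      conv_lhs => rw [← e.symm_apply_apply x, ← Finsupp.sum_single (e x)]
      rw [map_finsuppSum]
      exact Finsupp.sum_congr fun i _ => he_symm_single i _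
    rw [hxe]
    exact Submodule.sum_mem _ fun i _ => tmul_mem_tensorSub (hx' i) _

lemma tensorSub_inf (H H' : Submodule ℂ V) :
    tensorSub W (H ⊓ H') = tensorSub W H ⊓ tensorSub W H' := by
  classical
  let b := Basis.ofVectorSpace ℂ W
  rw [tensorSub_eq_iInf b, tensorSub_eq_iInf b, tensorSub_eq_iInf b, ← iInf_inf_eq]
  simp only [Submodule.comap_inf]

lemma finrank_inf_submodular {M : Type*} [AddCommGroup M] [Module ℂ M] [FiniteDimensional ℂ M]
    (C A B : Submodule ℂ M) :
    finrank ℂ ↥(C ⊓ A) + finrank ℂ ↥(C ⊓ B) ≤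
      finrank ℂ ↥(C ⊓ (A ⊔ B)) + finrank ℂ ↥(C ⊓ (A ⊓ B)) := by
  have h1 : (C ⊓ A) ⊔ (C ⊓ B) ≤ C ⊓ (A ⊔ B) :=
    sup_le (inf_le_inf_left _ le_sup_left) (inf_le_inf_left _ le_sup_right)
  have h2 : (C ⊓ A) ⊓ (C ⊓ B) = C ⊓ (A ⊓ B) := by
    rw [inf_inf_inf_comm, inf_idem]
  calc finrank ℂ ↥(C ⊓ A) + finrank ℂ ↥(C ⊓ B)
      = finrank ℂ ↥((C ⊓ A) ⊔ (C ⊓ B)) + finrank ℂ ↥((C ⊓ A) ⊓ (C ⊓ B)) :=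
        (Submodule.finrank_sup_add_finrank_inf_eq _ _).symm
    _ ≤ finrank ℂ ↥(C ⊓ (A ⊔ B)) + finrank ℂ ↥(C ⊓ (A ⊓ B)) :=
        add_le_add (Submodule.finrank_mono h1) (le_of_eq (by rw [h2]))

/-- the maximal slope is attained on a sum of maximizers, and there is a unique
largest subspace of maximal slope containing all maximizers. -/
theorem stmt_8 (V W : Type*) [AddCommGroup V] [Module ℂ V] [FiniteDimensional ℂ V] [Nontrivial V]
    [AddCommGroup W] [Module ℂ W] [FiniteDimensional ℂ W] [Nontrivial W]
    (m : ℕ) (hm : 1 ≤ m) (ω : Fin m → ℕ) (hω : ∀ i, 0 < ω i)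
    (K : Fin m → Submodule ℂ (V ⊗[ℂ] W))
    (μmax : ℚ)
    (hub : ∀ H : Submodule ℂ V, H ≠ ⊥ → slopeConfig ω K H ≤ μmax)
    (hattained : ∃ H : Submodule ℂ V, H ≠ ⊥ ∧ slopeConfig ω K H = μmax) :
    (∀ H H' : Submodule ℂ V, H ≠ ⊥ → H' ≠ ⊥ →
      slopeConfig ω K H = μmax → slopeConfig ω K H' = μmax →
      slopeConfig ω K (H ⊔ H') = μmax) ∧
    (∃! V1 : Submodule ℂ V, slopeConfig ω K V1 = μmax ∧
      ∀ H : Submodule ℂ V, H ≠ ⊥ → slopeConfig ω K H = μmax → H ≤ V1) := by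
  classical
  set F : Submodule ℂ V → ℚ :=
    fun H => ∑ i, (ω i : ℚ) * (finrank ℂ ↥(K i ⊓ tensorSub W H) : ℚ) with hF
  have hslope : ∀ H : Submodule ℂ V, slopeConfig ω K H = F H / (finrank ℂ ↥H : ℚ) := by
    intro H; rfl
  have hrk : ∀ H : Submodule ℂ V, H ≠ ⊥ → 0 < (finrank ℂ ↥H : ℚ) := by
    intro H hH
    have : finrank ℂ ↥H ≠ 0 := fun h => hH (Submodule.finrank_eq_zero.mp h)
    exact_mod_cast Nat.pos_of_ne_zero this
  have hFub : ∀ H : Submodule ℂ V, H ≠ ⊥ → F H ≤ μmax * (finrank ℂ ↥H : ℚ) := by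
    intro H hH
    have := hub H hH
    rw [hslope, div_le_iff₀ (hrk H hH)] at this
    linarith [this]
  have hFeq : ∀ H : Submodule ℂ V, H ≠ ⊥ → slopeConfig ω K H = μmax →
      F H = μmax * (finrank ℂ ↥H : ℚ) := by
    intro H hH h
    rw [hslope, div_eq_iff (hrk H hH).ne'] at h
    linarith [h]
  have hFbot : F ⊥ = 0 := by
    have hb : ∀ i : Fin m, K i ⊓ tensorSub W (⊥ : Submodule ℂ V) = ⊥ := fun i => by
      rw [tensorSub_bot, inf_bot_eq]
    rw [hF]
    refine Finset.sum_eq_zero fun i _ => ?_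
    rw [hb i]
    simp
  -- submodularity of F
  have hFsub : ∀ H H' : Submodule ℂ V,
      F H + F H' ≤ F (H ⊔ H') + F (H ⊓ H') := by
    intro H H'
    rw [hF, ← Finset.sum_add_distrib, ← Finset.sum_add_distrib]
    refine Finset.sum_le_sum fun i _ => ?_
    rw [← mul_add, ← mul_add]
    have hkey := finrank_inf_submodular (K i) (tensorSub W H) (tensorSub W H')
    rw [← tensorSub_sup, ← tensorSub_inf] at hkey
    have hkeyQ : (finrank ℂ ↥(K i ⊓ tensorSub W H) : ℚ) + finrank ℂ ↥(K i ⊓ tensorSub W H') ≤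
        (finrank ℂ ↥(K i ⊓ tensorSub W (H ⊔ H')) : ℚ) +
          finrank ℂ ↥(K i ⊓ tensorSub W (H ⊓ H')) := by exact_mod_cast hkey
    have hω' : (0 : ℚ) ≤ ω i := by positivity
    exact mul_le_mul_of_nonneg_left hkeyQ hω'
  -- part (a)
  have hsup : ∀ H H' : Submodule ℂ V, H ≠ ⊥ → H' ≠ ⊥ →
      slopeConfig ω K H = μmax → slopeConfig ω K H' = μmax →
      slopeConfig ω K (H ⊔ H') = μmax := by
    intro H H' hH hH' hs hs'
    have hHs : H ⊔ H' ≠ ⊥ := fun h => hH (le_bot_iff.mp (le_trans le_sup_left h.le))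
    have hdim : (finrank ℂ ↥(H ⊔ H') : ℚ) + finrank ℂ ↥(H ⊓ H') =
        (finrank ℂ ↥H : ℚ) + finrank ℂ ↥H' := by
      exact_mod_cast Submodule.finrank_sup_add_finrank_inf_eq H H'
    have h1 : F H = μmax * finrank ℂ ↥H := hFeq H hH hs
    have h2 : F H' = μmax * finrank ℂ ↥H' := hFeq H' hH' hs'
    have h3 : F (H ⊔ H') ≤ μmax * finrank ℂ ↥(H ⊔ H') := hFub _ hHs
    have h4 : F (H ⊓ H') ≤ μmax * finrank ℂ ↥(H ⊓ H') := by
      by_cases hb : H ⊓ H' = ⊥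
      · rw [hb, hFbot]
        simp
      · exact hFub _ hb
    have h5 := hFsub H H'
    have h7 : μmax * (finrank ℂ ↥(H ⊔ H') : ℚ) + μmax * finrank ℂ ↥(H ⊓ H') =
        μmax * finrank ℂ ↥H + μmax * finrank ℂ ↥H' := by
      rw [← mul_add, ← mul_add, hdim]
    have h6 : F (H ⊔ H') = μmax * finrank ℂ ↥(H ⊔ H') := by linarith
    rw [hslope, h6, mul_div_assoc, div_self (hrk _ hHs).ne', mul_one]
  refine ⟨hsup, ?_⟩
  -- part (b)
  obtain ⟨H₀, hH₀ne, hH₀⟩ := hattained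
  set P : ℕ → Prop := fun n => ∃ H : Submodule ℂ V, H ≠ ⊥ ∧ slopeConfig ω K H = μmax ∧
    finrank ℂ ↥H = n with hP
  have hPbound : ∀ n, P n → n ≤ finrank ℂ V := by
    rintro n ⟨H, -, -, rfl⟩
    exact Submodule.finrank_le H
  have hP0 : P (finrank ℂ ↥H₀) := ⟨H₀, hH₀ne, hH₀, rfl⟩
  set n₀ := Nat.findGreatest P (finrank ℂ V) with hn₀
  have hPn₀ : P n₀ := Nat.findGreatest_spec (hPbound _ hP0) hP0
  obtain ⟨V1, hV1ne, hV1slope, hV1rank⟩ := hPn₀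
  have hmaximal : ∀ H : Submodule ℂ V, H ≠ ⊥ → slopeConfig ω K H = μmax → H ≤ V1 := by
    intro H hH hs
    have hsupne : H ⊔ V1 ≠ ⊥ := fun h => hH (le_bot_iff.mp (le_trans le_sup_left h.le))
    have hsupslope : slopeConfig ω K (H ⊔ V1) = μmax := hsup H V1 hH hV1ne hs hV1slope
    have hle : finrank ℂ ↥(H ⊔ V1) ≤ n₀ := by
      by_contra hlt
      push_neg at hlt
      exact Nat.findGreatest_is_greatest hlt (hPbound _ ⟨H ⊔ V1, hsupne, hsupslope, rfl⟩)
        ⟨H ⊔ V1, hsupne, hsupslope, rfl⟩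
    have : V1 = H ⊔ V1 :=
      Submodule.eq_of_le_of_finrank_le le_sup_right (by rw [hV1rank]; exact hle)
    exact le_trans le_sup_left this.ge
  refine ⟨V1, ⟨hV1slope, hmaximal⟩, ?_⟩
  rintro V1' ⟨hV1'slope, hV1'max⟩
  have hV1'ne : V1' ≠ ⊥ := by
    rintro rfl
    exact hH₀ne (le_bot_iff.mp (hV1'max H₀ hH₀ne hH₀))
  exact le_antisymm (hmaximal V1' hV1'ne hV1'slope) (hV1'max V1 hV1ne hV1slope)
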